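/- Fix L, N ∈ ℕ with N < L. Let x, y ∈ 𝒱_L^N, let k = d_L^N(x,y), and let u be a shortest path from x to y with particle labels (ũ^(l))_{l≤k} tracking individual particles along the path. Then for every j ∈ {1,...,N}, the total distance traveled by particle j, L_j^u := Σ_{l=1}^k d_L(ũ_j^(l-1), ũ_j^(l)), satisfies L_j^u = d_L(ũ_j^(0), ũ_j^(k)) ≤ L/2, and ũ_j^(k) ∈ {(x_j + L_j^u) mod L, (x_j − L_j^u) mod L}. -/

import Mathlib

open Finset
open scoped Classical
open Fin.NatCast

noncomputable section

/-- Distance on the cycle `ℤ/L`. -/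
def cycDist {L : ℕ} (a b : Fin L) : ℕ := min (a - b).val (b - a).val

/-- Hard-core configuration graph: an edge moves one particle to a free neighbouring site. -/
def hcGraph (L : ℕ) [NeZero L] : SimpleGraph (Finset (Fin L)) where
  Adj x y := x.card = y.card ∧ ∃ j : Fin L, symmDiff x y = {j, j + ((1 : ℕ) : Fin L)}
  symm := by
    constructor
    rintro x y ⟨h1, j, h2⟩
    refine ⟨h1.symm, j, ?_⟩
    rw [symmDiff_comm]
    exact h2
  loopless := by
    constructor
    rintro x ⟨-, j, h2⟩
    have hj : j ∈ symmDiff x x := by rw [h2]; simp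
    rw [symmDiff_self] at hj
    simp at hj

/-- Graph distance `d_L^N` on the hard-core configuration graph. -/
def dN (L : ℕ) [NeZero L] (x y : Finset (Fin L)) : ℕ := (hcGraph L).dist x y

/-- The droplet (cluster of `N` consecutive sites) centred at `m`. -/
def droplet (L N : ℕ) [NeZero L] (m : Fin L) : Finset (Fin L) :=
  (Finset.range N).image fun i => m - (((N - 1) / 2 : ℕ) : Fin L) + (i : Fin L)

def isDroplet (L N : ℕ) [NeZero L] (c : Finset (Fin L)) : Prop := ∃ m : Fin L, c = droplet L N m

/-- Distance to the set of droplet configurations. -/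
def distDrop (L N : ℕ) [NeZero L] (x : Finset (Fin L)) : ℕ :=
  sInf (Set.range fun m : Fin L => dN L x (droplet L N m))

/-- Centres of droplets closest to `x`. -/
def WL (L N : ℕ) [NeZero L] (x : Finset (Fin L)) : Set (Fin L) :=
  {m : Fin L | dN L x (droplet L N m) = distDrop L N x}

/-- A path of length `k` from `x` to `y` in the configuration graph. -/
def IsPathN (L : ℕ) [NeZero L] (u : ℕ → Finset (Fin L)) (k : ℕ) (x y : Finset (Fin L)) : Prop :=
  u 0 = x ∧ u k = y ∧ ∀ l < k, (hcGraph L).Adj (u l) (u (l + 1))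

/-- The particle-tracking of a path: the labelled positions `ũ`. -/
def IsTracking (L N : ℕ) [NeZero L] (u : ℕ → Finset (Fin L)) (k : ℕ) (ut : ℕ → Fin N → Fin L) : Prop :=
  StrictMono (ut 0) ∧
  (∀ l ≤ k, u l = Finset.image (ut l) Finset.univ) ∧
  ∀ l < k, ∀ j : Fin N, (ut l j ∈ u (l + 1) → ut (l + 1) j = ut l j) ∧
    (ut l j ∉ u (l + 1) → ut (l + 1) j ∈ u (l + 1) \ u l)

/-- `L_j^u` : distance travelled by particle `j` along the tracked path. -/
def travel {L N : ℕ} (ut : ℕ → Fin N → Fin L) (k : ℕ) (j : Fin N) : ℕ :=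
  ∑ l ∈ Finset.range k, cycDist (ut l j) (ut (l + 1) j)

/-- `I_-^u` : particles moving counter-clockwise. -/
def Iminus {L N : ℕ} [NeZero L] (ut : ℕ → Fin N → Fin L) (k : ℕ) (j : Fin N) : Prop :=
  travel ut k j ≠ 0 ∧ ∃ l ≤ k, ut l j = ut 0 j - ((1 : ℕ) : Fin L)

/-- `I_+^u` : particles moving clockwise. -/
def Iplus {L N : ℕ} [NeZero L] (ut : ℕ → Fin N → Fin L) (k : ℕ) (j : Fin N) : Prop :=
  travel ut k j ≠ 0 ∧ ∃ l ≤ k, ut l j = ut 0 j + ((1 : ℕ) : Fin L)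

/-- `I_0^u` : particles that do not move. -/
def I0 {L N : ℕ} (ut : ℕ → Fin N → Fin L) (k : ℕ) (j : Fin N) : Prop := travel ut k j = 0

/-- The midpoint `M = ⌊(L-1)/2⌋` of the cycle. -/
def midL (L : ℕ) [NeZero L] : Fin L := (((L - 1) / 2 : ℕ) : Fin L)

/-- The sector of size `θ` around `m`, as a set. -/
def sector (L : ℕ) [NeZero L] (m : Fin L) (θ : ℝ) : Set (Fin L) :=
  {k : Fin L | (cycDist k m : ℝ) < θ * L}

/-- The sector of size `θ` around `m`, as a finset. -/
def secF (L : ℕ) [NeZero L] (m : Fin L) (θ : ℝ) : Finset (Fin L) :=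
  Finset.univ.filter fun k => (cycDist k m : ℝ) < θ * L

section Aux
open Fin.CommRing
variable {L : ℕ} [NeZero L]

private lemma natAbs_sum_le' (s : Finset ℕ) (f : ℕ → ℤ) :
    (∑ i ∈ s, f i).natAbs ≤ ∑ i ∈ s, (f i).natAbs := by
  classical
  induction s using Finset.induction_on with
  | empty => simp
  | @insert a s h ih =>
    rw [Finset.sum_insert h, Finset.sum_insert h]
    have := Int.natAbs_add_le (f a) (∑ i ∈ s, f i)
    omega

private lemma int_pos_of_eq (s : Finset ℕ) (f : ℕ → ℤ) (a : ℕ) (ha : a ∈ s) (hfa : f a = 1)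
    (h : (∑ l ∈ s, f l).natAbs = ∑ l ∈ s, (f l).natAbs) : 1 ≤ ∑ l ∈ s, f l := by
  have h1 := Finset.sum_erase_add s f ha
  have h2 := Finset.sum_erase_add s (fun l => (f l).natAbs) ha
  have h3 := natAbs_sum_le' (s.erase a) f
  rw [hfa] at h1
  simp only [hfa] at h2
  omega

private lemma int_neg_of_eq (s : Finset ℕ) (f : ℕ → ℤ) (a : ℕ) (ha : a ∈ s) (hfa : f a = -1)
    (h : (∑ l ∈ s, f l).natAbs = ∑ l ∈ s, (f l).natAbs) : ∑ l ∈ s, f l ≤ -1 := by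
  have h1 := Finset.sum_erase_add s f ha
  have h2 := Finset.sum_erase_add s (fun l => (f l).natAbs) ha
  have h3 := natAbs_sum_le' (s.erase a) f
  rw [hfa] at h1
  simp only [hfa] at h2
  omega

private lemma int_both_false (s : Finset ℕ) (f : ℕ → ℤ) (a b : ℕ) (ha : a ∈ s) (hb : b ∈ s)
    (hab : a ≠ b) (hfa : f a = 1) (hfb : f b = -1)
    (h : (∑ l ∈ s, f l).natAbs = ∑ l ∈ s, (f l).natAbs) : False := by
  have hb' : b ∈ s.erase a := Finset.mem_erase.2 ⟨fun e => hab e.symm, hb⟩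
  have h1 := Finset.sum_erase_add s f ha
  have h2 := Finset.sum_erase_add s (fun l => (f l).natAbs) ha
  have h3 := Finset.sum_erase_add (s.erase a) f hb'
  have h4 := Finset.sum_erase_add (s.erase a) (fun l => (f l).natAbs) hb'
  have h5 := natAbs_sum_le' ((s.erase a).erase b) f
  rw [hfa] at h1
  rw [hfb] at h3
  simp only [hfa] at h2
  simp only [hfb] at h4
  omega

private lemma hc_two_ne_zero (hL : 3 ≤ L) : ((2 : ℕ) : Fin L) ≠ 0 := by
  intro hcontra
  rw [Fin.natCast_eq_zero] at hcontra
  have := Nat.le_of_dvd (by norm_num) hcontra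
  omega

private lemma val_neg (a : Fin L) : (-a).val = (L - a.val) % L := by
  rw [Fin.neg_def]

/-- Basic facts about an edge of the hard-core graph. -/
private lemma adj_step {x y : Finset (Fin L)} (h : (hcGraph L).Adj x y) :
    ∃ s t : Fin L, x \ y = {s} ∧ y \ x = {t} ∧ (t = s + 1 ∨ s = t + 1) := by
  obtain ⟨hcard, m, hm⟩ := h
  rw [Nat.cast_one] at hm
  have hcc : (x \ y).card = (y \ x).card := Finset.card_sdiff_comm hcard
  have hdisj : Disjoint (x \ y) (y \ x) := disjoint_sdiff_sdiff
  have hunion : (x \ y) ∪ (y \ x) = symmDiff x y := by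
    ext p
    simp [Finset.mem_union, Finset.mem_sdiff, Finset.mem_symmDiff]
  have hcard2 : (symmDiff x y).card = 2 * (x \ y).card := by
    rw [← hunion, Finset.card_union_of_disjoint hdisj, ← hcc]
    omega
  have hmm : m ≠ m + 1 := by
    intro he
    have : ({m, m + 1} : Finset (Fin L)).card = 1 := by
      rw [← he]; simp
    rw [hm, this] at hcard2
    omega
  have hc2 : ({m, m + 1} : Finset (Fin L)).card = 2 := Finset.card_pair hmm
  have hone : (x \ y).card = 1 := by
    rw [hm, hc2] at hcard2; omega
  obtain ⟨s, hs⟩ := Finset.card_eq_one.1 hone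
  obtain ⟨t, ht⟩ := Finset.card_eq_one.1 (hcc ▸ hone)
  refine ⟨s, t, hs, ht, ?_⟩
  have hsx : s ∈ x ∧ s ∉ y := by
    have : s ∈ x \ y := hs ▸ Finset.mem_singleton_self s
    exact Finset.mem_sdiff.1 this
  have htx : t ∈ y ∧ t ∉ x := by
    have : t ∈ y \ x := ht ▸ Finset.mem_singleton_self t
    exact Finset.mem_sdiff.1 this
  have hst : s ≠ t := fun he => htx.2 (he ▸ hsx.1)
  have hsm : s ∈ ({m, m + 1} : Finset (Fin L)) := by
    rw [← hm, Finset.mem_symmDiff]; exact Or.inl ⟨hsx.1, hsx.2⟩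
  have htm : t ∈ ({m, m + 1} : Finset (Fin L)) := by
    rw [← hm, Finset.mem_symmDiff]; exact Or.inr ⟨htx.1, htx.2⟩
  simp only [Finset.mem_insert, Finset.mem_singleton] at hsm htm
  rcases hsm with h1 | h1 <;> rcases htm with h2 | h2
  · exact absurd (h1.trans h2.symm) hst
  · exact Or.inl (by rw [h1, h2])
  · exact Or.inr (by rw [h1, h2])
  · exact absurd (h1.trans h2.symm) hst

/-- Construct an adjacency by moving one particle. -/
private lemma adj_move (x : Finset (Fin L)) (a b : Fin L)
    (hab : b = a + 1 ∨ a = b + 1) (hne : a ≠ b) (ha : a ∈ x) (hb : b ∉ x) :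
    (hcGraph L).Adj x (insert b (x.erase a)) := by
  have hbe : b ∉ x.erase a := fun h => hb (Finset.mem_of_mem_erase h)
  constructor
  · rw [Finset.card_insert_of_notMem hbe, Finset.card_erase_of_mem ha]
    have : 1 ≤ x.card := Finset.card_pos.2 ⟨a, ha⟩
    omega
  · have hsd : symmDiff x (insert b (x.erase a)) = {a, b} := by
      ext p
      simp only [Finset.mem_symmDiff, Finset.mem_insert, Finset.mem_erase,
        Finset.mem_singleton]
      constructor
      · rintro (⟨hpx, hp⟩ | ⟨hp, hpx⟩)
        · push_neg at hp
          exact Or.inl (by by_contra hpa; exact (hp.2 hpa) hpx)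
        · rcases hp with hp | hp
          · exact Or.inr hp
          · exact absurd hp.2 hpx
      · rintro (rfl | rfl)
        · refine Or.inl ⟨ha, ?_⟩
          push_neg
          exact ⟨hne, fun h => absurd rfl h⟩
        · exact Or.inr ⟨Or.inl rfl, hb⟩
    rcases hab with h | h
    · exact ⟨a, by rw [hsd, Nat.cast_one, h]⟩
    · refine ⟨b, by rw [hsd, Nat.cast_one, ← h, Finset.pair_comm]⟩

end Aux

section Flow
open Fin.CommRing
variable {L : ℕ} [NeZero L]

private lemma exists_shift_add (e f : Fin L) (hne : f ≠ e) :
    ∃ n : ℕ, e + ((n + 1 : ℕ) : Fin L) = f := by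
  refine ⟨(f - e).val - 1, ?_⟩
  have h1 : (f - e).val ≠ 0 := by
    intro h
    have h2 : f - e = 0 := Fin.ext (by simpa using h)
    exact hne (by rwa [sub_eq_zero] at h2)
  have h2 : (f - e).val - 1 + 1 = (f - e).val := by omega
  rw [h2, Fin.cast_val_eq_self]
  ring

private lemma exists_shift_sub (e f : Fin L) (hne : f ≠ e) :
    ∃ n : ℕ, e - ((n + 1 : ℕ) : Fin L) = f := by
  refine ⟨(e - f).val - 1, ?_⟩
  have h1 : (e - f).val ≠ 0 := by
    intro h
    have h2 : e - f = 0 := Fin.ext (by simpa using h)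
    exact hne (by rw [sub_eq_zero] at h2; exact h2.symm)
  have h2 : (e - f).val - 1 + 1 = (e - f).val := by omega
  rw [h2, Fin.cast_val_eq_self]
  ring

private lemma nonfull_free (x : Finset (Fin L)) (hlt : x.card < L) : ∃ f : Fin L, f ∉ x := by
  by_contra hall
  push_neg at hall
  have : x = Finset.univ := Finset.eq_univ_iff_forall.2 hall
  rw [this, Finset.card_univ, Fintype.card_fin] at hlt
  omega

private lemma find_pos (x y : Finset (Fin L)) (F : Fin L → ℤ)
    (hcons : ∀ p : Fin L, F (p - 1) - F p =
      (if p ∈ y then (1:ℤ) else 0) - (if p ∈ x then 1 else 0))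
    (hne : x.Nonempty) (hlt : x.card < L) (e0 : Fin L) (he0 : 1 ≤ F e0) :
    ∃ e : Fin L, 1 ≤ F e ∧ e ∈ x ∧ e + 1 ∉ x := by
  have step_up : ∀ p : Fin L, p ∈ x → 1 ≤ F (p - 1) → 1 ≤ F p := by
    intro p hp h
    have hc := hcons p
    rw [if_pos hp] at hc
    split_ifs at hc <;> omega
  have step_down : ∀ p : Fin L, p ∉ x → 1 ≤ F p → 1 ≤ F (p - 1) := by
    intro p hp h
    have hc := hcons p
    rw [if_neg hp] at hc
    split_ifs at hc <;> omega
  by_cases he0x : e0 ∈ x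
  · obtain ⟨f, hf⟩ := nonfull_free x hlt
    obtain ⟨nf, hnf⟩ := exists_shift_add e0 f (fun h => hf (h ▸ he0x))
    have hex : ∃ n : ℕ, e0 + ((n + 1 : ℕ) : Fin L) ∉ x := ⟨nf, hnf ▸ hf⟩
    set n0 := Nat.find hex with hn0
    have hspec : e0 + ((n0 + 1 : ℕ) : Fin L) ∉ x := Nat.find_spec hex
    have hmin : ∀ m, m < n0 → e0 + ((m + 1 : ℕ) : Fin L) ∈ x :=
      fun m hm => not_not.1 (Nat.find_min hex hm)
    have hchain : ∀ m : ℕ, m ≤ n0 → e0 + ((m : ℕ) : Fin L) ∈ x ∧ 1 ≤ F (e0 + ((m : ℕ) : Fin L)) := by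
      intro m
      induction m with
      | zero => intro _; constructor <;> simpa using (by first | exact he0x | exact he0)
      | succ m ih =>
        intro hm
        have hmem : e0 + ((m + 1 : ℕ) : Fin L) ∈ x := hmin m (by omega)
        have ihm := ih (by omega)
        have harith : e0 + ((m + 1 : ℕ) : Fin L) - 1 = e0 + ((m : ℕ) : Fin L) := by
          push_cast; ring
        exact ⟨hmem, step_up _ hmem (by rw [harith]; exact ihm.2)⟩
    refine ⟨e0 + ((n0 : ℕ) : Fin L), (hchain n0 le_rfl).2, (hchain n0 le_rfl).1, ?_⟩
    have harith : e0 + ((n0 : ℕ) : Fin L) + 1 = e0 + ((n0 + 1 : ℕ) : Fin L) := by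
      push_cast; ring
    rw [harith]; exact hspec
  · obtain ⟨a, ha⟩ := hne
    obtain ⟨na, hna⟩ := exists_shift_sub e0 a (fun h => he0x (h ▸ ha))
    have hex : ∃ n : ℕ, e0 - ((n + 1 : ℕ) : Fin L) ∈ x := ⟨na, hna ▸ ha⟩
    set n0 := Nat.find hex with hn0
    have hspec : e0 - ((n0 + 1 : ℕ) : Fin L) ∈ x := Nat.find_spec hex
    have hmin : ∀ m, m < n0 → e0 - ((m + 1 : ℕ) : Fin L) ∉ x :=
      fun m hm => Nat.find_min hex hm
    have hnotin : ∀ m, m ≤ n0 → e0 - ((m : ℕ) : Fin L) ∉ x := by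
      intro m hm
      match m, hm with
      | 0, _ => simpa using he0x
      | (m+1), hm => exact hmin m (by omega)
    have hchain : ∀ m : ℕ, m ≤ n0 + 1 → 1 ≤ F (e0 - ((m : ℕ) : Fin L)) := by
      intro m
      induction m with
      | zero => intro _; simpa using he0
      | succ m ih =>
        intro hm
        have hp : e0 - ((m : ℕ) : Fin L) ∉ x := hnotin m (by omega)
        have harith : e0 - ((m : ℕ) : Fin L) - 1 = e0 - ((m + 1 : ℕ) : Fin L) := by
          push_cast; ring
        have := step_down _ hp (ih (by omega))
        rwa [harith] at this
    refine ⟨e0 - ((n0 + 1 : ℕ) : Fin L), hchain (n0 + 1) le_rfl, hspec, ?_⟩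
    have harith : e0 - ((n0 + 1 : ℕ) : Fin L) + 1 = e0 - ((n0 : ℕ) : Fin L) := by
      push_cast; ring
    rw [harith]; exact hnotin n0 le_rfl

private lemma find_neg (x y : Finset (Fin L)) (F : Fin L → ℤ)
    (hcons : ∀ p : Fin L, F (p - 1) - F p =
      (if p ∈ y then (1:ℤ) else 0) - (if p ∈ x then 1 else 0))
    (hne : x.Nonempty) (hlt : x.card < L) (e0 : Fin L) (he0 : F e0 ≤ -1) :
    ∃ e : Fin L, F e ≤ -1 ∧ e + 1 ∈ x ∧ e ∉ x := by
  have step_dn : ∀ p : Fin L, p ∈ x → F p ≤ -1 → F (p - 1) ≤ -1 := by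
    intro p hp h
    have hc := hcons p
    rw [if_pos hp] at hc
    split_ifs at hc <;> omega
  have step_up : ∀ p : Fin L, p ∉ x → F (p - 1) ≤ -1 → F p ≤ -1 := by
    intro p hp h
    have hc := hcons p
    rw [if_neg hp] at hc
    split_ifs at hc <;> omega
  by_cases he0x : e0 ∈ x
  · obtain ⟨f, hf⟩ := nonfull_free x hlt
    obtain ⟨nf, hnf⟩ := exists_shift_sub e0 f (fun h => hf (h ▸ he0x))
    have hex : ∃ n : ℕ, e0 - ((n + 1 : ℕ) : Fin L) ∉ x := ⟨nf, hnf ▸ hf⟩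
    set n0 := Nat.find hex with hn0
    have hspec : e0 - ((n0 + 1 : ℕ) : Fin L) ∉ x := Nat.find_spec hex
    have hmin : ∀ m, m < n0 → e0 - ((m + 1 : ℕ) : Fin L) ∈ x :=
      fun m hm => not_not.1 (Nat.find_min hex hm)
    have hmem : ∀ m, m ≤ n0 → e0 - ((m : ℕ) : Fin L) ∈ x := by
      intro m hm
      match m, hm with
      | 0, _ => simpa using he0x
      | (m+1), hm => exact hmin m (by omega)
    have hchain : ∀ m : ℕ, m ≤ n0 + 1 → F (e0 - ((m : ℕ) : Fin L)) ≤ -1 := by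
      intro m
      induction m with
      | zero => intro _; simpa using he0
      | succ m ih =>
        intro hm
        have hp : e0 - ((m : ℕ) : Fin L) ∈ x := hmem m (by omega)
        have harith : e0 - ((m : ℕ) : Fin L) - 1 = e0 - ((m + 1 : ℕ) : Fin L) := by
          push_cast; ring
        have := step_dn _ hp (ih (by omega))
        rwa [harith] at this
    refine ⟨e0 - ((n0 + 1 : ℕ) : Fin L), hchain (n0 + 1) le_rfl, ?_, hspec⟩
    have harith : e0 - ((n0 + 1 : ℕ) : Fin L) + 1 = e0 - ((n0 : ℕ) : Fin L) := by
      push_cast; ring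
    rw [harith]; exact hmem n0 le_rfl
  · obtain ⟨a, ha⟩ := hne
    obtain ⟨na, hna⟩ := exists_shift_add e0 a (fun h => he0x (h ▸ ha))
    have hex : ∃ n : ℕ, e0 + ((n + 1 : ℕ) : Fin L) ∈ x := ⟨na, hna ▸ ha⟩
    set n0 := Nat.find hex with hn0
    have hspec : e0 + ((n0 + 1 : ℕ) : Fin L) ∈ x := Nat.find_spec hex
    have hmin : ∀ m, m < n0 → e0 + ((m + 1 : ℕ) : Fin L) ∉ x :=
      fun m hm => Nat.find_min hex hm
    have hnotin : ∀ m, m ≤ n0 → e0 + ((m : ℕ) : Fin L) ∉ x := by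
      intro m hm
      match m, hm with
      | 0, _ => simpa using he0x
      | (m+1), hm => exact hmin m (by omega)
    have hchain : ∀ m : ℕ, m ≤ n0 → F (e0 + ((m : ℕ) : Fin L)) ≤ -1 := by
      intro m
      induction m with
      | zero => intro _; simpa using he0
      | succ m ih =>
        intro hm
        have hp : e0 + ((m + 1 : ℕ) : Fin L) ∉ x := hnotin (m+1) hm
        have harith : e0 + ((m + 1 : ℕ) : Fin L) - 1 = e0 + ((m : ℕ) : Fin L) := by
          push_cast; ring
        exact step_up _ hp (by rw [harith]; exact ih (by omega))
    refine ⟨e0 + ((n0 : ℕ) : Fin L), hchain n0 le_rfl, ?_, hnotin n0 le_rfl⟩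
    have harith : e0 + ((n0 : ℕ) : Fin L) + 1 = e0 + ((n0 + 1 : ℕ) : Fin L) := by
      push_cast; ring
    rw [harith]; exact hspec

end Flow

section FlowWalk
open Fin.CommRing
variable {L : ℕ} [NeZero L]

private lemma x_eq_y_of_flow_zero (x y : Finset (Fin L)) (F : Fin L → ℤ)
    (hcons : ∀ p : Fin L, F (p - 1) - F p =
      (if p ∈ y then (1:ℤ) else 0) - (if p ∈ x then 1 else 0))
    (hF : ∀ e, F e = 0) : x = y := by
  ext p
  have hc := hcons p
  rw [hF, hF] at hc
  by_cases hp : p ∈ x <;> by_cases hq : p ∈ y <;> simp [hp, hq] at hc ⊢ <;> omega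

private lemma flow_walk :
    ∀ (S : ℕ) (x y : Finset (Fin L)) (F : Fin L → ℤ),
      x.card = y.card → x.card < L →
      (∀ p : Fin L, F (p - 1) - F p =
        (if p ∈ y then (1:ℤ) else 0) - (if p ∈ x then 1 else 0)) →
      (∑ e : Fin L, (F e).natAbs) ≤ S →
      ∃ w : (hcGraph L).Walk x y, w.length ≤ S := by
  intro S
  induction S with
  | zero =>
    intro x y F hcard hlt hcons hsum
    have hzero : ∀ e, F e = 0 := by
      intro e
      have h1 : (F e).natAbs = 0 := by
        have h2 : ∑ e : Fin L, (F e).natAbs = 0 := by omega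
        have := Finset.sum_eq_zero_iff.1 h2 e (Finset.mem_univ e)
        exact this
      omega
    obtain rfl : x = y := x_eq_y_of_flow_zero x y F hcons hzero
    exact ⟨SimpleGraph.Walk.nil, by simp⟩
  | succ S ih =>
    intro x y F hcard hlt hcons hsum
    by_cases hxy : x = y
    · subst hxy
      exact ⟨SimpleGraph.Walk.nil, by simp⟩
    have hFne : ∃ e, F e ≠ 0 := by
      by_contra hall
      push_neg at hall
      exact hxy (x_eq_y_of_flow_zero x y F hcons hall)
    have hxne : x.Nonempty := by
      rcases Finset.eq_empty_or_nonempty x with h | h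
      · exfalso
        apply hxy
        rw [h]
        have : y.card = 0 := by rw [← hcard, h]; simp
        exact (Finset.card_eq_zero.1 this).symm
      · exact h
    obtain ⟨e0, he0⟩ := hFne
    rcases he0.lt_or_gt with hsign | hsign
    · -- F e0 ≤ -1 : move a particle counterclockwise
      obtain ⟨e, hFe, hex1, hex⟩ := find_neg x y F hcons hxne hlt e0 (by omega)
      have hee : e ≠ e + 1 := fun h => hex (h ▸ hex1)
      have hadj := adj_move x (e + 1) e (Or.inr rfl) (Ne.symm hee) hex1 hex
      set x' := insert e (x.erase (e + 1)) with hx'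
      have hx'mem : ∀ q : Fin L, q ∈ x' ↔ q = e ∨ (q ∈ x ∧ q ≠ e + 1) := by
        intro q
        simp only [hx', Finset.mem_insert, Finset.mem_erase]
        tauto
      set F' : Fin L → ℤ := fun a => if a = e then F e + 1 else F a with hF'
      have hcons' : ∀ p : Fin L, F' (p - 1) - F' p =
          (if p ∈ y then (1:ℤ) else 0) - (if p ∈ x' then 1 else 0) := by
        intro p
        have hc := hcons p
        have hiff : p - 1 = e ↔ p = e + 1 := sub_eq_iff_eq_add
        by_cases h1 : p = e + 1
        · have hp2 : p ≠ e := fun h => hee (h ▸ h1)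
          have hsub : p - 1 = e := hiff.2 h1
          have hpx : p ∈ x := h1 ▸ hex1
          have hpx' : p ∉ x' := by
            rw [hx'mem]
            push_neg
            exact ⟨hp2, fun _ => h1⟩
          rw [if_pos hpx] at hc
          rw [hsub] at hc
          simp only [hF', if_pos rfl, if_neg hp2, if_neg hpx']
          by_cases hy : p ∈ y <;> simp [hy] at hc ⊢ <;> omega
        · by_cases h2 : p = e
          · have hsub : p - 1 ≠ e := fun h => h1 (hiff.1 h)
            have hpx : p ∉ x := h2 ▸ hex
            have hpx' : p ∈ x' := (hx'mem p).2 (Or.inl h2)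
            rw [if_neg hpx] at hc
            rw [h2] at hc ⊢
            simp only [hF', if_pos rfl, if_neg (show e - 1 ≠ e from h2 ▸ hsub), if_pos ((hx'mem e).2 (Or.inl rfl))]
            by_cases hy : e ∈ y <;> simp [hy] at hc ⊢ <;> omega
          · have hsub : p - 1 ≠ e := fun h => h1 (hiff.1 h)
            have hxx' : (p ∈ x') ↔ (p ∈ x) := by
              rw [hx'mem]
              constructor
              · rintro (h | h)
                · exact absurd h h2
                · exact h.1
              · intro h; exact Or.inr ⟨h, h1⟩
            simp only [hF', if_neg hsub, if_neg h2]
            rw [hc]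
            simp [hxx']
      have hsum' : (∑ a : Fin L, (F' a).natAbs) ≤ S := by
        have h1 : ∑ a ∈ Finset.univ.erase e, (F' a).natAbs + (F' e).natAbs
            = ∑ a : Fin L, (F' a).natAbs := Finset.sum_erase_add _ _ (Finset.mem_univ e)
        have h2 : ∑ a ∈ Finset.univ.erase e, (F a).natAbs + (F e).natAbs
            = ∑ a : Fin L, (F a).natAbs := Finset.sum_erase_add _ _ (Finset.mem_univ e)
        have h3 : ∑ a ∈ Finset.univ.erase e, (F' a).natAbs
            = ∑ a ∈ Finset.univ.erase e, (F a).natAbs := by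
          refine Finset.sum_congr rfl fun a haa => ?_
          simp [hF', (Finset.mem_erase.1 haa).1]
        have h4 : (F' e).natAbs = (F e).natAbs - 1 := by
          simp only [hF', if_pos rfl]
          omega
        omega
      obtain ⟨w', hw'⟩ := ih x' y F' (by rw [← hadj.1]; exact hcard) (by rw [← hadj.1]; exact hlt) hcons' hsum'
      exact ⟨SimpleGraph.Walk.cons hadj w', by rw [SimpleGraph.Walk.length_cons]; omega⟩
    · -- 1 ≤ F e0 : move a particle clockwise
      obtain ⟨e, hFe, hex, hex1⟩ := find_pos x y F hcons hxne hlt e0 (by omega)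
      have hee : e ≠ e + 1 := fun h => hex1 (h ▸ hex)
      have hadj := adj_move x e (e + 1) (Or.inl rfl) hee hex hex1
      set x' := insert (e + 1) (x.erase e) with hx'
      have hx'mem : ∀ q : Fin L, q ∈ x' ↔ q = e + 1 ∨ (q ∈ x ∧ q ≠ e) := by
        intro q
        simp only [hx', Finset.mem_insert, Finset.mem_erase]
        tauto
      set F' : Fin L → ℤ := fun a => if a = e then F e - 1 else F a with hF'
      have hcons' : ∀ p : Fin L, F' (p - 1) - F' p =
          (if p ∈ y then (1:ℤ) else 0) - (if p ∈ x' then 1 else 0) := by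
        intro p
        have hc := hcons p
        have hiff : p - 1 = e ↔ p = e + 1 := sub_eq_iff_eq_add
        by_cases h1 : p = e + 1
        · have hp2 : p ≠ e := fun h => hee (h ▸ h1)
          have hsub : p - 1 = e := hiff.2 h1
          have hpx : p ∉ x := h1 ▸ hex1
          have hpx' : p ∈ x' := (hx'mem p).2 (Or.inl h1)
          rw [if_neg hpx] at hc
          rw [hsub] at hc
          simp only [hF', if_pos rfl, if_neg hp2, if_pos hpx']
          by_cases hy : p ∈ y <;> simp [hy] at hc ⊢ <;> omega
        · by_cases h2 : p = e
          · have hsub : p - 1 ≠ e := fun h => h1 (hiff.1 h)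
            have hpx : p ∈ x := h2 ▸ hex
            have hpx' : p ∉ x' := by
              rw [hx'mem]
              push_neg
              exact ⟨fun h => h1 h, fun _ => h2⟩
            rw [if_pos hpx] at hc
            rw [h2] at hc ⊢
            simp only [hF', if_pos rfl, if_neg (show e - 1 ≠ e from h2 ▸ hsub), if_neg (h2 ▸ hpx' : e ∉ x')]
            by_cases hy : e ∈ y <;> simp [hy] at hc ⊢ <;> omega
          · have hsub : p - 1 ≠ e := fun h => h1 (hiff.1 h)
            have hxx' : (p ∈ x') ↔ (p ∈ x) := by
              rw [hx'mem]
              constructor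
              · rintro (h | h)
                · exact absurd h h1
                · exact h.1
              · intro h; exact Or.inr ⟨h, h2⟩
            simp only [hF', if_neg hsub, if_neg h2]
            rw [hc]
            simp [hxx']
      have hsum' : (∑ a : Fin L, (F' a).natAbs) ≤ S := by
        have h1 : ∑ a ∈ Finset.univ.erase e, (F' a).natAbs + (F' e).natAbs
            = ∑ a : Fin L, (F' a).natAbs := Finset.sum_erase_add _ _ (Finset.mem_univ e)
        have h2 : ∑ a ∈ Finset.univ.erase e, (F a).natAbs + (F e).natAbs
            = ∑ a : Fin L, (F a).natAbs := Finset.sum_erase_add _ _ (Finset.mem_univ e)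
        have h3 : ∑ a ∈ Finset.univ.erase e, (F' a).natAbs
            = ∑ a ∈ Finset.univ.erase e, (F a).natAbs := by
          refine Finset.sum_congr rfl fun a haa => ?_
          simp [hF', (Finset.mem_erase.1 haa).1]
        have h4 : (F' e).natAbs = (F e).natAbs - 1 := by
          simp only [hF', if_pos rfl]
          omega
        omega
      obtain ⟨w', hw'⟩ := ih x' y F' (by rw [← hadj.1]; exact hcard) (by rw [← hadj.1]; exact hlt) hcons' hsum'
      exact ⟨SimpleGraph.Walk.cons hadj w', by rw [SimpleGraph.Walk.length_cons]; omega⟩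

end FlowWalk

section Cyc
open Fin.CommRing
variable {L : ℕ} [NeZero L]

private lemma cycDist_self' (a : Fin L) : cycDist a a = 0 := by
  simp [cycDist]

private lemma val_nonzero_of_ne {a b : Fin L} (h : a ≠ b) : (a - b).val ≠ 0 := by
  intro hv
  have h2 : a - b = 0 := Fin.ext (by simpa using hv)
  exact h (by rwa [sub_eq_zero] at h2)

private lemma val_sub_add_val_sub {a b : Fin L} (h : a ≠ b) :
    (a - b).val + (b - a).val = L := by
  have h1 : b - a = -(a - b) := by ring
  rw [h1, val_neg]
  have h2 := val_nonzero_of_ne h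
  have h3 := (a - b).isLt
  rw [Nat.mod_eq_of_lt (by omega)]
  omega

private lemma cycDist_one' (hL : 2 ≤ L) (a b : Fin L) (h : b = a + 1 ∨ a = b + 1) :
    cycDist a b = 1 := by
  have hval1 : ((1 : Fin L)).val = 1 := by
    rw [← Nat.cast_one, Fin.val_natCast, Nat.mod_eq_of_lt (by omega)]
  rcases h with h | h
  · have h1 : a - b = -1 := by rw [h]; ring
    have h2 : b - a = 1 := by rw [h]; ring
    rw [cycDist, h1, h2, val_neg, hval1, Nat.mod_eq_of_lt (by omega)]
    omega
  · have h1 : a - b = 1 := by rw [h]; ring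
    have h2 : b - a = -1 := by rw [h]; ring
    rw [cycDist, h1, h2, val_neg, hval1, Nat.mod_eq_of_lt (by omega)]
    omega

private lemma bullet_single (a b : Fin L) :
    2 * cycDist a b ≤ L ∧
      (b = a + ((cycDist a b : ℕ) : Fin L) ∨ b = a - ((cycDist a b : ℕ) : Fin L)) := by
  by_cases hab : a = b
  · subst hab
    rw [cycDist_self']
    have hpos : 0 < L := Nat.pos_of_ne_zero (NeZero.ne L)
    exact ⟨by omega, Or.inl (by simp)⟩
  · have hv := val_sub_add_val_sub hab
    constructor
    · rw [cycDist]
      omega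
    · rcases le_total ((a - b).val) ((b - a).val) with h | h
      · right
        rw [cycDist, min_eq_left h, Fin.cast_val_eq_self]
        ring
      · left
        rw [cycDist, min_eq_right h, Fin.cast_val_eq_self]
        ring

private lemma cycDist_add_cast (a : Fin L) (t : ℕ) (h2 : 2 * t ≤ L) :
    cycDist a (a + ((t : ℕ) : Fin L)) = t := by
  have hpos : 0 < L := Nat.pos_of_ne_zero (NeZero.ne L)
  rcases Nat.eq_zero_or_pos t with rfl | ht
  · simp [cycDist_self']
  have htL : t < L := by omega
  have h1 : a - (a + ((t : ℕ) : Fin L)) = -((t : ℕ) : Fin L) := by ring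
  have h1' : a + ((t : ℕ) : Fin L) - a = ((t : ℕ) : Fin L) := by ring
  rw [cycDist, h1, h1', val_neg, Fin.val_natCast, Nat.mod_eq_of_lt htL,
    Nat.mod_eq_of_lt (show L - t < L by omega)]
  omega

private lemma cycDist_sub_cast (a : Fin L) (t : ℕ) (h2 : 2 * t ≤ L) :
    cycDist a (a - ((t : ℕ) : Fin L)) = t := by
  have hpos : 0 < L := Nat.pos_of_ne_zero (NeZero.ne L)
  rcases Nat.eq_zero_or_pos t with rfl | ht
  · simp [cycDist_self']
  have htL : t < L := by omega
  have h1 : a - (a - ((t : ℕ) : Fin L)) = ((t : ℕ) : Fin L) := by ring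
  have h1' : a - ((t : ℕ) : Fin L) - a = -((t : ℕ) : Fin L) := by ring
  rw [cycDist, h1, h1', val_neg, Fin.val_natCast, Nat.mod_eq_of_lt htL,
    Nat.mod_eq_of_lt (show L - t < L by omega)]
  omega

end Cyc

/-- Along any shortest path, each particle's travelled distance equals the cycle distance
between its initial and final positions, is at most `L/2`, and the final position is the
initial one shifted by `±L_j^u`. -/
theorem travel_le_half (L N : ℕ) [NeZero L] (hN : N < L)
    (x y : Finset (Fin L)) (hx : x.card = N) (hy : y.card = N)
    (k : ℕ) (hk : k = dN L x y)
    (u : ℕ → Finset (Fin L)) (hpath : IsPathN L u k x y)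
    (ut : ℕ → Fin N → Fin L) (htr : IsTracking L N u k ut) :
    ∀ j : Fin N,
      travel ut k j = cycDist (ut 0 j) (ut k j) ∧
      2 * travel ut k j ≤ L ∧
      (ut k j = ut 0 j + ((travel ut k j : ℕ) : Fin L) ∨
       ut k j = ut 0 j - ((travel ut k j : ℕ) : Fin L)) := by
  intro j
  have hN1 : 0 < N := j.pos
  have hL2 : 2 ≤ L := by omega
  obtain ⟨hu0, huk, hadj⟩ := hpath
  obtain ⟨hmono, himg, hstep⟩ := htr
  rcases Nat.lt_or_ge k 2 with hk2 | hk2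
  · have hk01 : k = 0 ∨ k = 1 := by omega
    rcases hk01 with rfl | rfl
    · have ht0 : travel ut 0 j = 0 := by simp [travel]
      rw [ht0]
      exact ⟨(cycDist_self' _).symm, by omega, Or.inl (by simp)⟩
    · have ht1 : travel ut 1 j = cycDist (ut 0 j) (ut 1 j) := by simp [travel]
      rw [ht1]
      exact ⟨rfl, (bullet_single _ _).1, (bullet_single _ _).2⟩
  have hL3 : 3 ≤ L := by
    by_contra hc3
    have hLeq : L = 2 := by omega
    have hNeq : N = 1 := by omega
    have hd1 : dN L x y ≤ 1 := by
      by_cases hxy : x = y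
      · subst hxy
        unfold dN
        simp [SimpleGraph.dist_self]
      · obtain ⟨a, ha⟩ := Finset.card_eq_one.1 (by rw [hx, hNeq])
        obtain ⟨b, hb⟩ := Finset.card_eq_one.1 (by rw [hy, hNeq])
        have hab : a ≠ b := fun h => hxy (by rw [ha, hb, h])
        have hadj2 : (hcGraph L).Adj x y := by
          refine ⟨by rw [hx, hy], a, ?_⟩
          have hb1 : b = a + ((1:ℕ) : Fin L) := by
            subst hLeq
            apply Fin.ext
            rw [Fin.val_add]
            have hv : ((1:ℕ) : Fin 2).val = 1 := rfl
            rw [hv]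
            have h1 := a.isLt
            have h2 := b.isLt
            have h3 : a.val ≠ b.val := fun h => hab (Fin.ext h)
            omega
          rw [ha, hb, ← hb1]
          ext p
          simp only [Finset.mem_symmDiff, Finset.mem_singleton, Finset.mem_insert]
          constructor
          · rintro (⟨rfl, -⟩ | ⟨rfl, -⟩)
            · exact Or.inl rfl
            · exact Or.inr rfl
          · rintro (rfl | rfl)
            · exact Or.inl ⟨rfl, hab⟩
            · exact Or.inr ⟨rfl, fun h => hab h.symm⟩
        unfold dN
        calc (hcGraph L).dist x y
            ≤ (SimpleGraph.Walk.cons hadj2 SimpleGraph.Walk.nil).length :=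
              SimpleGraph.dist_le _
          _ = 1 := by simp
    rw [← hk] at hd1
    omega
  -- basic structural facts
  have hcardu : ∀ l, l ≤ k → (u l).card = N := by
    intro l
    induction l with
    | zero => intro _; rw [hu0, hx]
    | succ l ih =>
      intro hl
      rw [← (hadj l (by omega)).1]
      exact ih (by omega)
  have hmemimg : ∀ l, l ≤ k → ∀ i : Fin N, ut l i ∈ u l := by
    intro l hl i
    rw [himg l hl]
    exact Finset.mem_image_of_mem _ (Finset.mem_univ i)
  -- step data
  have hsteps : ∀ l, l < k → ∃ s t : Fin L,
      u l \ u (l+1) = {s} ∧ u (l+1) \ u l = {t} ∧ (t = s + 1 ∨ s = t + 1) :=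
    fun l hl => adj_step (hadj l hl)
  choose! sfn tfn hsd htd hdir using hsteps
  have hs_mem : ∀ l, l < k → sfn l ∈ u l ∧ sfn l ∉ u (l+1) := by
    intro l hl
    have h : sfn l ∈ u l \ u (l+1) := by
      rw [hsd l hl]; exact Finset.mem_singleton_self _
    exact Finset.mem_sdiff.1 h
  have ht_mem : ∀ l, l < k → tfn l ∈ u (l+1) ∧ tfn l ∉ u l := by
    intro l hl
    have h : tfn l ∈ u (l+1) \ u l := by
      rw [htd l hl]; exact Finset.mem_singleton_self _
    exact Finset.mem_sdiff.1 h
  have hst_ne : ∀ l, l < k → sfn l ≠ tfn l :=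
    fun l hl h => (ht_mem l hl).2 (h ▸ (hs_mem l hl).1)
  have hnotboth : ∀ l, l < k → ¬(tfn l = sfn l + 1 ∧ sfn l = tfn l + 1) := by
    rintro l hl ⟨h1, h2⟩
    have h3 : sfn l + 0 = sfn l + (1 + 1) := by
      rw [add_zero, ← add_assoc, ← h1]
      exact h2
    have h4 : (0 : Fin L) = 1 + 1 := add_left_cancel h3
    have h5 : ((2:ℕ) : Fin L) = 0 := by
      have h6 : (2:ℕ) = 1 + 1 := rfl
      rw [h6, Nat.cast_add, Nat.cast_one]
      exact h4.symm
    exact hc_two_ne_zero hL3 h5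
  set dstep : ℕ → Fin L → ℤ := fun l e =>
    (if e = sfn l ∧ tfn l = sfn l + 1 then 1 else 0) +
      (if e = tfn l ∧ sfn l = tfn l + 1 then -1 else 0) with hdstep_def
  have hD : ∀ l, l < k →
      (tfn l = sfn l + 1 ∧ ∀ e, dstep l e = if e = sfn l then 1 else 0) ∨
      (sfn l = tfn l + 1 ∧ ∀ e, dstep l e = if e = tfn l then -1 else 0) := by
    intro l hl
    rcases hdir l hl with h | h
    · left
      refine ⟨h, fun e => ?_⟩
      have h2 : ¬(e = tfn l ∧ sfn l = tfn l + 1) := fun hc => hnotboth l hl ⟨h, hc.2⟩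
      simp only [hdstep_def]
      rw [if_neg h2, add_zero]
      by_cases he : e = sfn l
      · rw [if_pos ⟨he, h⟩, if_pos he]
      · rw [if_neg (fun hc => he hc.1), if_neg he]
    · right
      refine ⟨h, fun e => ?_⟩
      have h2 : ¬(e = sfn l ∧ tfn l = sfn l + 1) := fun hc => hnotboth l hl ⟨hc.2, h⟩
      simp only [hdstep_def]
      rw [if_neg h2, zero_add]
      by_cases he : e = tfn l
      · rw [if_pos ⟨he, h⟩, if_pos he]
      · rw [if_neg (fun hc => he hc.1), if_neg he]
  set Fl : Fin L → ℤ := fun e => ∑ l ∈ Finset.range k, dstep l e with hFl_def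
  have hDabs : ∀ l, l < k → ∑ e : Fin L, (dstep l e).natAbs = 1 := by
    intro l hl
    rcases hD l hl with ⟨-, hf⟩ | ⟨-, hf⟩
    · have habs : ∀ e : Fin L, (dstep l e).natAbs = if e = sfn l then 1 else 0 := by
        intro e; rw [hf e]; by_cases h : e = sfn l <;> simp [h]
      rw [Finset.sum_congr rfl (fun e _ => habs e),
        Finset.sum_ite_eq' Finset.univ (sfn l) (fun _ => 1)]
      simp
    · have habs : ∀ e : Fin L, (dstep l e).natAbs = if e = tfn l then 1 else 0 := by
        intro e; rw [hf e]; by_cases h : e = tfn l <;> simp [h]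
      rw [Finset.sum_congr rfl (fun e _ => habs e),
        Finset.sum_ite_eq' Finset.univ (tfn l) (fun _ => 1)]
      simp
  have hCk : ∑ e : Fin L, ∑ l ∈ Finset.range k, (dstep l e).natAbs = k := by
    rw [Finset.sum_comm]
    rw [Finset.sum_congr rfl (fun l hl => hDabs l (Finset.mem_range.1 hl))]
    simp
  have hFsum_le : ∑ e : Fin L, (Fl e).natAbs ≤ k := by
    calc ∑ e : Fin L, (Fl e).natAbs
        ≤ ∑ e : Fin L, ∑ l ∈ Finset.range k, (dstep l e).natAbs :=
          Finset.sum_le_sum (fun e _ => natAbs_sum_le' _ _)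
      _ = k := hCk
  -- conservation along the path
  have hgen : ∀ n, n ≤ k → ∀ p : Fin L,
      (∑ l ∈ Finset.range n, dstep l (p - 1)) - (∑ l ∈ Finset.range n, dstep l p) =
        (if p ∈ u n then (1:ℤ) else 0) - (if p ∈ u 0 then 1 else 0) := by
    intro n
    induction n with
    | zero => intro _ p; simp
    | succ n ih =>
      intro hn p
      have hn' : n < k := by omega
      rw [Finset.sum_range_succ, Finset.sum_range_succ]
      have ihp := ih (by omega) p
      have e1 : ∀ q : Fin L, (q ∈ u n ∧ q ∉ u (n+1)) ↔ q = sfn n := by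
        intro q
        rw [← Finset.mem_sdiff, hsd n hn', Finset.mem_singleton]
      have e2 : ∀ q : Fin L, (q ∈ u (n+1) ∧ q ∉ u n) ↔ q = tfn n := by
        intro q
        rw [← Finset.mem_sdiff, htd n hn', Finset.mem_singleton]
      have hdelta : (if p ∈ u (n+1) then (1:ℤ) else 0) - (if p ∈ u n then 1 else 0)
          = (if p = tfn n then 1 else 0) - (if p = sfn n then 1 else 0) := by
        rcases (e1 (sfn n)).mpr rfl with ⟨ha1, ha2⟩
        rcases (e2 (tfn n)).mpr rfl with ⟨hb1, hb2⟩
        by_cases h1 : p = sfn n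
        · rw [h1, if_neg ha2, if_pos ha1, if_neg (hst_ne n hn'), if_pos rfl]
        · by_cases h2 : p = tfn n
          · rw [h2, if_pos hb1, if_neg hb2, if_pos rfl,
              if_neg (fun h => hst_ne n hn' h.symm)]
          · have hmem : p ∈ u (n+1) ↔ p ∈ u n := by
              constructor
              · intro h; by_contra hc; exact h2 ((e2 p).mp ⟨h, hc⟩)
              · intro h; by_contra hc; exact h1 ((e1 p).mp ⟨h, hc⟩)
            rw [if_neg h2, if_neg h1]
            by_cases h3 : p ∈ u n
            · rw [if_pos h3, if_pos (hmem.mpr h3)]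
              norm_num
            · rw [if_neg h3, if_neg (fun h => h3 (hmem.mp h))]
      have hstep1 : dstep n (p - 1) - dstep n p =
          (if p ∈ u (n+1) then (1:ℤ) else 0) - (if p ∈ u n then 1 else 0) := by
        rcases hD n hn' with ⟨hdir1, hform⟩ | ⟨hdir1, hform⟩
        · have hiff : p - 1 = sfn n ↔ p = tfn n := by
            rw [hdir1]; exact sub_eq_iff_eq_add
          rw [hform, hform, hdelta, if_congr hiff rfl rfl]
        · have hiff : p - 1 = tfn n ↔ p = sfn n := by
            rw [hdir1]; exact sub_eq_iff_eq_add
          rw [hform, hform, hdelta, if_congr hiff rfl rfl]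
          split_ifs <;> omega
      omega
  have hconsF : ∀ p : Fin L, Fl (p - 1) - Fl p =
      (if p ∈ y then (1:ℤ) else 0) - (if p ∈ x then 1 else 0) := by
    intro p
    have h := hgen k le_rfl p
    rw [huk, hu0] at h
    simp only [hFl_def]
    exact h
  -- the path is a geodesic, so the flow bound is tight
  have hkS : k ≤ ∑ e : Fin L, (Fl e).natAbs := by
    obtain ⟨w, hw⟩ := flow_walk (∑ e : Fin L, (Fl e).natAbs) x y Fl
      (by rw [hx, hy]) (by omega) hconsF le_rfl
    rw [hk]
    unfold dN
    calc (hcGraph L).dist x y ≤ w.length := SimpleGraph.dist_le w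
      _ ≤ _ := hw
  have hSk : ∑ e : Fin L, (Fl e).natAbs = k := le_antisymm hFsum_le hkS
  have hpt : ∀ e : Fin L, (Fl e).natAbs = ∑ l ∈ Finset.range k, (dstep l e).natAbs := by
    by_contra hc
    push_neg at hc
    obtain ⟨e1, he1⟩ := hc
    have hlt1 : (Fl e1).natAbs < ∑ l ∈ Finset.range k, (dstep l e1).natAbs :=
      lt_of_le_of_ne (natAbs_sum_le' _ _) he1
    have hstrict : ∑ e : Fin L, (Fl e).natAbs
        < ∑ e : Fin L, ∑ l ∈ Finset.range k, (dstep l e).natAbs :=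
      Finset.sum_lt_sum (fun i _ => natAbs_sum_le' _ _) ⟨e1, Finset.mem_univ e1, hlt1⟩
    omega
  -- median bounds
  have hmedpos : 2 * (Finset.univ.filter (fun e : Fin L => 1 ≤ Fl e)).card ≤ L := by
    obtain ⟨w1, hw1⟩ := flow_walk (∑ e : Fin L, (Fl e - 1).natAbs) x y (fun e => Fl e - 1)
      (by rw [hx, hy]) (by omega)
      (fun p => by have := hconsF p; omega) le_rfl
    have hk1 : k ≤ ∑ e : Fin L, (Fl e - 1).natAbs := by
      rw [hk]
      unfold dN
      calc (hcGraph L).dist x y ≤ w1.length := SimpleGraph.dist_le w1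
        _ ≤ _ := hw1
    have hptw : ∀ e : Fin L, ((Fl e - 1).natAbs : ℤ)
        = ((Fl e).natAbs : ℤ) + (if 1 ≤ Fl e then (-1:ℤ) else 1) := by
      intro e
      by_cases h : 1 ≤ Fl e
      · rw [if_pos h]; omega
      · rw [if_neg h]; omega
    have hfc := Finset.card_filter_add_card_filter_not
      (s := (Finset.univ : Finset (Fin L))) (fun e : Fin L => 1 ≤ Fl e)
    rw [Finset.card_univ, Fintype.card_fin] at hfc
    have hsum2 : ((∑ e : Fin L, (Fl e - 1).natAbs : ℕ) : ℤ)
        = (k : ℤ) + ((L : ℤ)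
          - 2 * (Finset.univ.filter (fun e : Fin L => 1 ≤ Fl e)).card) := by
      rw [Nat.cast_sum]
      rw [Finset.sum_congr rfl (fun e _ => hptw e), Finset.sum_add_distrib]
      have c1 : ∑ e : Fin L, ((Fl e).natAbs : ℤ) = (k : ℤ) := by
        rw [← Nat.cast_sum, hSk]
      rw [c1]
      congr 1
      rw [Finset.sum_ite, Finset.sum_const, Finset.sum_const]
      simp only [nsmul_eq_mul]
      omega
    omega
  have hmedneg : 2 * (Finset.univ.filter (fun e : Fin L => Fl e ≤ -1)).card ≤ L := by
    obtain ⟨w1, hw1⟩ := flow_walk (∑ e : Fin L, (Fl e + 1).natAbs) x y (fun e => Fl e + 1)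
      (by rw [hx, hy]) (by omega)
      (fun p => by have := hconsF p; omega) le_rfl
    have hk1 : k ≤ ∑ e : Fin L, (Fl e + 1).natAbs := by
      rw [hk]
      unfold dN
      calc (hcGraph L).dist x y ≤ w1.length := SimpleGraph.dist_le w1
        _ ≤ _ := hw1
    have hptw : ∀ e : Fin L, ((Fl e + 1).natAbs : ℤ)
        = ((Fl e).natAbs : ℤ) + (if Fl e ≤ -1 then (-1:ℤ) else 1) := by
      intro e
      by_cases h : Fl e ≤ -1
      · rw [if_pos h]; omega
      · rw [if_neg h]; omega
    have hfc := Finset.card_filter_add_card_filter_not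
      (s := (Finset.univ : Finset (Fin L))) (fun e : Fin L => Fl e ≤ -1)
    rw [Finset.card_univ, Fintype.card_fin] at hfc
    have hsum2 : ((∑ e : Fin L, (Fl e + 1).natAbs : ℕ) : ℤ)
        = (k : ℤ) + ((L : ℤ)
          - 2 * (Finset.univ.filter (fun e : Fin L => Fl e ≤ -1)).card) := by
      rw [Nat.cast_sum]
      rw [Finset.sum_congr rfl (fun e _ => hptw e), Finset.sum_add_distrib]
      have c1 : ∑ e : Fin L, ((Fl e).natAbs : ℤ) = (k : ℤ) := by
        rw [← Nat.cast_sum, hSk]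
      rw [c1]
      congr 1
      rw [Finset.sum_ite, Finset.sum_const, Finset.sum_const]
      simp only [nsmul_eq_mul]
      omega
    omega
  -- the moves of particle j
  set mset : Finset ℕ := (Finset.range k).filter (fun l => ut l j ≠ ut (l + 1) j)
    with hmset_def
  have hmset_mem : ∀ l, l ∈ mset ↔ (l < k ∧ ut l j ≠ ut (l + 1) j) := by
    intro l
    rw [hmset_def, Finset.mem_filter, Finset.mem_range]
  have hmoveiff : ∀ l, l < k → (ut l j ≠ ut (l+1) j ↔ ut l j = sfn l) := by
    intro l hl
    have h1 := hstep l hl j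
    constructor
    · intro hne2
      have hin : ut l j ∈ u l := hmemimg l (le_of_lt hl) j
      have hnin : ut l j ∉ u (l+1) := by
        intro hin2
        exact hne2 (h1.1 hin2).symm
      have : ut l j ∈ u l \ u (l+1) := Finset.mem_sdiff.2 ⟨hin, hnin⟩
      rw [hsd l hl] at this
      exact Finset.mem_singleton.1 this
    · intro hs heq
      have h2 : ut (l+1) j ∈ u (l+1) := hmemimg (l+1) (by omega) j
      rw [← heq, hs] at h2
      exact (hs_mem l hl).2 h2
  have hmovet : ∀ l, l < k → ut l j = sfn l → ut (l+1) j = tfn l := by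
    intro l hl hs
    have hnin : ut l j ∉ u (l+1) := hs ▸ (hs_mem l hl).2
    have h2 := (hstep l hl j).2 hnin
    rw [htd l hl] at h2
    exact Finset.mem_singleton.1 h2
  have htravel : travel ut k j = mset.card := by
    show ∑ l ∈ Finset.range k, cycDist (ut l j) (ut (l + 1) j) = _
    rw [hmset_def, Finset.card_filter]
    refine Finset.sum_congr rfl fun l hl => ?_
    have hl' := Finset.mem_range.1 hl
    by_cases hm : ut l j ≠ ut (l+1) j
    · rw [if_pos hm]
      have hs := (hmoveiff l hl').1 hm
      have ht := hmovet l hl' hs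
      rw [hs, ht]
      exact cycDist_one' hL2 _ _ (hdir l hl')
    · rw [if_neg hm]
      push_neg at hm
      rw [hm, cycDist_self']
  -- all moves of particle j go the same way
  have hconsec : ∀ l1 l2, l1 ∈ mset → l2 ∈ mset → l1 < l2 →
      (∀ m, l1 < m → m < l2 → m ∉ mset) →
      ((tfn l1 = sfn l1 + 1) ↔ (tfn l2 = sfn l2 + 1)) := by
    intro l1 l2 hm1 hm2 hlt hbet
    have hl1k : l1 < k := ((hmset_mem l1).1 hm1).1
    have hl2k : l2 < k := ((hmset_mem l2).1 hm2).1
    have hs1 : ut l1 j = sfn l1 := (hmoveiff l1 hl1k).1 ((hmset_mem l1).1 hm1).2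
    have ht1 : ut (l1+1) j = tfn l1 := hmovet l1 hl1k hs1
    have hs2 : ut l2 j = sfn l2 := (hmoveiff l2 hl2k).1 ((hmset_mem l2).1 hm2).2
    have hstay : ∀ d : ℕ, l1 + 1 + d ≤ l2 → ut (l1 + 1 + d) j = ut (l1 + 1) j := by
      intro d
      induction d with
      | zero => intro _; rfl
      | succ d ih =>
        intro hd
        have hnm : (l1 + 1 + d) ∉ mset := hbet _ (by omega) (by omega)
        have heq : ut (l1 + 1 + d) j = ut (l1 + 1 + d + 1) j := by
          by_contra hne2
          exact hnm ((hmset_mem _).2 ⟨by omega, hne2⟩)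
        have harr : l1 + 1 + (d + 1) = l1 + 1 + d + 1 := by omega
        rw [harr, ← heq]
        exact ih (by omega)
    have hpos2 : sfn l2 = tfn l1 := by
      have hds := hstay (l2 - (l1+1)) (by omega)
      have harr : l1 + 1 + (l2 - (l1 + 1)) = l2 := by omega
      rw [harr] at hds
      rw [← hs2, hds, ht1]
    have key : ∀ (e : Fin L), dstep l1 e = 1 → dstep l2 e = -1 → False := by
      intro e hd1 hd2
      exact int_both_false (Finset.range k) (fun l => dstep l e) l1 l2
        (Finset.mem_range.2 hl1k) (Finset.mem_range.2 hl2k) (by omega) hd1 hd2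
        (hpt e)
    have key' : ∀ (e : Fin L), dstep l1 e = -1 → dstep l2 e = 1 → False := by
      intro e hd1 hd2
      exact int_both_false (Finset.range k) (fun l => dstep l e) l2 l1
        (Finset.mem_range.2 hl2k) (Finset.mem_range.2 hl1k) (by omega) hd2 hd1
        (hpt e)
    constructor
    · intro hdir1
      by_contra hdir2
      have hdir2' : sfn l2 = tfn l2 + 1 := (hdir l2 hl2k).resolve_left hdir2
      have he2 : tfn l2 = sfn l1 := by
        have h6 : tfn l2 + 1 = sfn l1 + 1 := by
          rw [← hdir2', hpos2, hdir1]
        exact add_right_cancel h6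
      have hd1 : dstep l1 (sfn l1) = 1 := by
        rcases hD l1 hl1k with ⟨-, hf⟩ | ⟨hcontra, -⟩
        · rw [hf]; simp
        · exact absurd ⟨hdir1, hcontra⟩ (hnotboth l1 hl1k)
      have hd2 : dstep l2 (sfn l1) = -1 := by
        rcases hD l2 hl2k with ⟨hcontra, -⟩ | ⟨-, hf⟩
        · exact absurd hcontra hdir2
        · rw [hf, if_pos he2.symm]
      exact absurd hd2 (fun h => key (sfn l1) hd1 h)
    · intro hdir2
      by_contra hdir1
      have hdir1' : sfn l1 = tfn l1 + 1 := (hdir l1 hl1k).resolve_left hdir1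
      have he2 : sfn l2 = tfn l1 := hpos2
      have hd1 : dstep l1 (tfn l1) = -1 := by
        rcases hD l1 hl1k with ⟨hcontra, -⟩ | ⟨-, hf⟩
        · exact absurd hcontra hdir1
        · rw [hf]; simp
      have hd2 : dstep l2 (tfn l1) = 1 := by
        rcases hD l2 hl2k with ⟨-, hf⟩ | ⟨hcontra, -⟩
        · rw [hf, if_pos he2.symm]
        · exact absurd ⟨hdir2, hcontra⟩ (hnotboth l2 hl2k)
      exact key' (tfn l1) hd1 hd2
  have hdirsame : ∀ l1 l2, l1 ∈ mset → l2 ∈ mset → l1 < l2 →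
      ((tfn l1 = sfn l1 + 1) ↔ (tfn l2 = sfn l2 + 1)) := by
    have haux : ∀ d l1 l2, l2 - l1 ≤ d → l1 ∈ mset → l2 ∈ mset → l1 < l2 →
        ((tfn l1 = sfn l1 + 1) ↔ (tfn l2 = sfn l2 + 1)) := by
      intro d
      induction d with
      | zero => intro l1 l2 hd _ _ hlt; omega
      | succ d ih =>
        intro l1 l2 hd h1 h2 hlt
        by_cases hmid : ∃ m, m ∈ mset ∧ l1 < m ∧ m < l2
        · obtain ⟨m, hm, hm1, hm2⟩ := hmid
          exact (ih l1 m (by omega) h1 hm hm1).trans (ih m l2 (by omega) hm h2 hm2)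
        · push_neg at hmid
          exact hconsec l1 l2 h1 h2 hlt (fun m hma hmb hmm => absurd (hmid m hmm hma) (by omega))
    exact fun l1 l2 h1 h2 hlt => haux (l2 - l1) l1 l2 le_rfl h1 h2 hlt
  -- counting function
  set cnt : ℕ → ℕ := fun l => (mset.filter (fun m => m < l)).card with hcnt_def
  have hcnt0 : cnt 0 = 0 := by
    rw [hcnt_def]
    simp only []
    rw [Finset.filter_false_of_mem (fun m _ => by omega), Finset.card_empty]
  have hcnt_succ_mem : ∀ l, l ∈ mset → cnt (l+1) = cnt l + 1 := by
    intro l hl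
    rw [hcnt_def]
    simp only []
    have hset : mset.filter (fun m => m < l + 1) = insert l (mset.filter (fun m => m < l)) := by
      ext m
      simp only [Finset.mem_filter, Finset.mem_insert]
      constructor
      · rintro ⟨hm, hlt⟩
        rcases Nat.lt_or_ge m l with h | h
        · exact Or.inr ⟨hm, h⟩
        · exact Or.inl (by omega)
      · rintro (rfl | ⟨hm, hlt⟩)
        · exact ⟨hl, by omega⟩
        · exact ⟨hm, by omega⟩
    rw [hset, Finset.card_insert_of_notMem (fun hc => by
      have := (Finset.mem_filter.1 hc).2
      omega)]
  have hcnt_succ_nomem : ∀ l, l ∉ mset → cnt (l+1) = cnt l := by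
    intro l hl
    rw [hcnt_def]
    simp only []
    congr 1
    ext m
    simp only [Finset.mem_filter]
    constructor
    · rintro ⟨hm, hlt⟩
      refine ⟨hm, ?_⟩
      rcases Nat.lt_or_ge m l with h | h
      · exact h
      · exfalso; have : m = l := by omega
        exact hl (this ▸ hm)
    · rintro ⟨hm, hlt⟩
      exact ⟨hm, by omega⟩
  have hcnt_k : cnt k = mset.card := by
    rw [hcnt_def]
    simp only []
    congr 1
    apply Finset.filter_true_of_mem
    intro m hm
    exact ((hmset_mem m).1 hm).1
  have hcnt_lt : ∀ l, l ∈ mset → cnt l < mset.card := by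
    intro l hl
    apply Finset.card_lt_card
    refine (Finset.ssubset_iff_of_subset (Finset.filter_subset _ _)).2 ?_
    exact ⟨l, hl, fun hc => by have := (Finset.mem_filter.1 hc).2; omega⟩
  have hcnt_mono : ∀ l1 l2, l1 ∈ mset → l2 ∈ mset → l1 < l2 → cnt l1 < cnt l2 := by
    intro l1 l2 h1 h2 h12
    apply Finset.card_lt_card
    have hsub : mset.filter (fun m => m < l1) ⊆ mset.filter (fun m => m < l2) := by
      intro m hm
      have hm' := Finset.mem_filter.1 hm
      exact Finset.mem_filter.2 ⟨hm'.1, by omega⟩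
    refine (Finset.ssubset_iff_of_subset hsub).2 ?_
    exact ⟨l1, Finset.mem_filter.2 ⟨h1, h12⟩,
      fun hc => by have := (Finset.mem_filter.1 hc).2; omega⟩
  have himg2 : Finset.image cnt mset = Finset.range mset.card := by
    apply Finset.eq_of_subset_of_card_le
    · intro c hc
      obtain ⟨l, hl, rfl⟩ := Finset.mem_image.1 hc
      exact Finset.mem_range.2 (hcnt_lt l hl)
    · rw [Finset.card_range, Finset.card_image_of_injOn]
      intro l1 hl1 l2 hl2 heq
      by_contra hne2
      rcases Nat.lt_or_ge l1 l2 with h | h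
      · exact absurd heq (Nat.ne_of_lt (hcnt_mono l1 l2 hl1 hl2 h))
      · have h' : l2 < l1 := by omega
        exact absurd heq.symm (Nat.ne_of_lt (hcnt_mono l2 l1 hl2 hl1 h'))
  have hsurj : ∀ i, i < mset.card → ∃ l, l ∈ mset ∧ cnt l = i := by
    intro i hi
    have : i ∈ Finset.image cnt mset := by
      rw [himg2]; exact Finset.mem_range.2 hi
    obtain ⟨l, hl, hcl⟩ := Finset.mem_image.1 this
    exact ⟨l, hl, hcl⟩
  -- case split on whether particle j moves at all, and in which direction
  rcases Finset.eq_empty_or_nonempty mset with hms | hms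
  · have hstill : ∀ l, l ≤ k → ut l j = ut 0 j := by
      intro l
      induction l with
      | zero => intro _; rfl
      | succ l ih =>
        intro hl
        have hnm : l ∉ mset := by rw [hms]; exact Finset.notMem_empty l
        have heq : ut l j = ut (l+1) j := by
          by_contra hne2
          exact hnm ((hmset_mem l).2 ⟨by omega, hne2⟩)
        rw [← heq]
        exact ih (by omega)
    have h0 : travel ut k j = 0 := by rw [htravel, hms, Finset.card_empty]
    rw [h0, hstill k le_rfl]
    exact ⟨(cycDist_self' _).symm, by omega, Or.inl (by simp)⟩
  obtain ⟨l0, hl0⟩ := hms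
  by_cases hb : tfn l0 = sfn l0 + 1
  · -- all moves clockwise
    have hall : ∀ l, l ∈ mset → tfn l = sfn l + 1 := by
      intro l hl
      rcases lt_trichotomy l l0 with h | h | h
      · exact (hdirsame l l0 hl hl0 h).2 hb
      · rw [h]; exact hb
      · exact (hdirsame l0 l hl0 hl h).1 hb
    have hposform : ∀ l, l ≤ k → ut l j = ut 0 j + ((cnt l : ℕ) : Fin L) := by
      intro l
      induction l with
      | zero => intro _; rw [hcnt0]; simp
      | succ l ih =>
        intro hl
        by_cases hm : l ∈ mset
        · have hlk : l < k := ((hmset_mem l).1 hm).1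
          have hs := (hmoveiff l hlk).1 ((hmset_mem l).1 hm).2
          have ht := hmovet l hlk hs
          rw [ht, hall l hm, ← hs, ih (by omega), hcnt_succ_mem l hm]
          push_cast
          open Fin.CommRing in ring
        · have heq : ut l j = ut (l+1) j := by
            by_contra hne2
            exact hm ((hmset_mem l).2 ⟨by omega, hne2⟩)
          rw [← heq, ih (by omega), hcnt_succ_nomem l hm]
    have hfinal : ut k j = ut 0 j + ((mset.card : ℕ) : Fin L) := by
      rw [hposform k le_rfl, hcnt_k]
    have hedge : ∀ l, l ∈ mset → 1 ≤ Fl (sfn l) := by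
      intro l hl
      have hlk : l < k := ((hmset_mem l).1 hl).1
      have hd1 : dstep l (sfn l) = 1 := by
        rcases hD l hlk with ⟨-, hf⟩ | ⟨hcontra, -⟩
        · rw [hf]; simp
        · exact absurd ⟨hall l hl, hcontra⟩ (hnotboth l hlk)
      exact int_pos_of_eq (Finset.range k) (fun m => dstep m (sfn l)) l
        (Finset.mem_range.2 hlk) hd1 (hpt (sfn l))
    have hsfn_eq : ∀ l, l ∈ mset → sfn l = ut 0 j + ((cnt l : ℕ) : Fin L) := by
      intro l hl
      have hlk : l < k := ((hmset_mem l).1 hl).1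
      have hs := (hmoveiff l hlk).1 ((hmset_mem l).1 hl).2
      rw [← hs, hposform l (le_of_lt hlk)]
    have hcard_le : min mset.card L
        ≤ (Finset.univ.filter (fun e : Fin L => 1 ≤ Fl e)).card := by
      have hsubA : (Finset.range (min mset.card L)).image
          (fun i => ut 0 j + ((i : ℕ) : Fin L))
          ⊆ Finset.univ.filter (fun e : Fin L => 1 ≤ Fl e) := by
        intro e he
        obtain ⟨i, hi, rfl⟩ := Finset.mem_image.1 he
        have hi' : i < mset.card := lt_of_lt_of_le (Finset.mem_range.1 hi) (min_le_left _ _)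
        obtain ⟨l, hl, hcl⟩ := hsurj i hi'
        rw [← hcl, ← hsfn_eq l hl]
        exact Finset.mem_filter.2 ⟨Finset.mem_univ _, hedge l hl⟩
      have hinj3 : Set.InjOn (fun i => ut 0 j + ((i : ℕ) : Fin L))
          ↑(Finset.range (min mset.card L)) := by
        intro i1 h1 i2 h2 heq
        have hi1 : i1 < L := lt_of_lt_of_le (Finset.mem_range.1 (Finset.mem_coe.1 h1)) (min_le_right _ _)
        have hi2 : i2 < L := lt_of_lt_of_le (Finset.mem_range.1 (Finset.mem_coe.1 h2)) (min_le_right _ _)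
        have hcast : ((i1 : ℕ) : Fin L) = ((i2 : ℕ) : Fin L) := add_left_cancel heq
        have := congrArg Fin.val hcast
        rw [Fin.val_natCast, Fin.val_natCast, Nat.mod_eq_of_lt hi1, Nat.mod_eq_of_lt hi2] at this
        exact this
      calc min mset.card L
          = ((Finset.range (min mset.card L)).image
              (fun i => ut 0 j + ((i : ℕ) : Fin L))).card := by
            rw [Finset.card_image_of_injOn hinj3, Finset.card_range]
        _ ≤ _ := Finset.card_le_card hsubA
    have hbound : 2 * mset.card ≤ L := by omega
    rw [htravel, hfinal]
    exact ⟨(cycDist_add_cast _ _ hbound).symm, hbound, Or.inl rfl⟩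
  · -- all moves counterclockwise
    have hall : ∀ l, l ∈ mset → sfn l = tfn l + 1 := by
      intro l hl
      have hlk : l < k := ((hmset_mem l).1 hl).1
      have hnl : ¬ (tfn l = sfn l + 1) := by
        intro hplus
        apply hb
        rcases lt_trichotomy l l0 with h | h | h
        · exact (hdirsame l l0 hl hl0 h).1 hplus
        · rw [← h]; exact hplus
        · exact (hdirsame l0 l hl0 hl h).2 hplus
      exact (hdir l hlk).resolve_left hnl
    have hposform : ∀ l, l ≤ k → ut l j = ut 0 j - ((cnt l : ℕ) : Fin L) := by
      intro l
      induction l with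
      | zero => intro _; rw [hcnt0]; simp
      | succ l ih =>
        intro hl
        by_cases hm : l ∈ mset
        · have hlk : l < k := ((hmset_mem l).1 hm).1
          have hs := (hmoveiff l hlk).1 ((hmset_mem l).1 hm).2
          have ht := hmovet l hlk hs
          have htf : tfn l = sfn l - 1 := by rw [hall l hm]; open Fin.CommRing in ring
          rw [ht, htf, ← hs, ih (by omega), hcnt_succ_mem l hm]
          push_cast
          open Fin.CommRing in ring
        · have heq : ut l j = ut (l+1) j := by
            by_contra hne2
            exact hm ((hmset_mem l).2 ⟨by omega, hne2⟩)
          rw [← heq, ih (by omega), hcnt_succ_nomem l hm]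
    have hfinal : ut k j = ut 0 j - ((mset.card : ℕ) : Fin L) := by
      rw [hposform k le_rfl, hcnt_k]
    have hedge : ∀ l, l ∈ mset → Fl (tfn l) ≤ -1 := by
      intro l hl
      have hlk : l < k := ((hmset_mem l).1 hl).1
      have hd1 : dstep l (tfn l) = -1 := by
        rcases hD l hlk with ⟨hcontra, -⟩ | ⟨-, hf⟩
        · exact absurd ⟨hcontra, hall l hl⟩ (hnotboth l hlk)
        · rw [hf]; simp
      exact int_neg_of_eq (Finset.range k) (fun m => dstep m (tfn l)) l
        (Finset.mem_range.2 hlk) hd1 (hpt (tfn l))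
    have htfn_eq : ∀ l, l ∈ mset → tfn l = (ut 0 j - 1) - ((cnt l : ℕ) : Fin L) := by
      intro l hl
      have hlk : l < k := ((hmset_mem l).1 hl).1
      have hs := (hmoveiff l hlk).1 ((hmset_mem l).1 hl).2
      have htf : tfn l = sfn l - 1 := by rw [hall l hl]; open Fin.CommRing in ring
      rw [htf, ← hs, hposform l (le_of_lt hlk)]
      open Fin.CommRing in ring
    have hcard_le : min mset.card L
        ≤ (Finset.univ.filter (fun e : Fin L => Fl e ≤ -1)).card := by
      have hsubA : (Finset.range (min mset.card L)).image
          (fun i => (ut 0 j - 1) - ((i : ℕ) : Fin L))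
          ⊆ Finset.univ.filter (fun e : Fin L => Fl e ≤ -1) := by
        intro e he
        obtain ⟨i, hi, rfl⟩ := Finset.mem_image.1 he
        have hi' : i < mset.card := lt_of_lt_of_le (Finset.mem_range.1 hi) (min_le_left _ _)
        obtain ⟨l, hl, hcl⟩ := hsurj i hi'
        rw [← hcl, ← htfn_eq l hl]
        exact Finset.mem_filter.2 ⟨Finset.mem_univ _, hedge l hl⟩
      have hinj3 : Set.InjOn (fun i => (ut 0 j - 1) - ((i : ℕ) : Fin L))
          ↑(Finset.range (min mset.card L)) := by
        intro i1 h1 i2 h2 heq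
        have hi1 : i1 < L := lt_of_lt_of_le (Finset.mem_range.1 (Finset.mem_coe.1 h1)) (min_le_right _ _)
        have hi2 : i2 < L := lt_of_lt_of_le (Finset.mem_range.1 (Finset.mem_coe.1 h2)) (min_le_right _ _)
        have hcast : ((i1 : ℕ) : Fin L) = ((i2 : ℕ) : Fin L) := sub_right_injective heq
        have := congrArg Fin.val hcast
        rw [Fin.val_natCast, Fin.val_natCast, Nat.mod_eq_of_lt hi1, Nat.mod_eq_of_lt hi2] at this
        exact this
      calc min mset.card L
          = ((Finset.range (min mset.card L)).image
              (fun i => (ut 0 j - 1) - ((i : ℕ) : Fin L))).card := by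
            rw [Finset.card_image_of_injOn hinj3, Finset.card_range]
        _ ≤ _ := Finset.card_le_card hsubA
    have hbound : 2 * mset.card ≤ L := by omega
    rw [htravel, hfinal]
    exact ⟨(cycDist_sub_cast _ _ hbound).symm, hbound, Or.inr rfl⟩
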